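/- There exists a partition of the Euclidean plane ℝ² into three Borel sets B₀, B₁, B₂ such that no B_i contains an unbounded subset S satisfying S = {2c − x : x ∈ S} for some point c ∈ ℝ². -/

import Mathlib

open Set

private lemma quad_aux' (a b c : ℝ) (hsum : a + b + c = 0) (hb : b ≤ a) (hc : c ≤ a) :
    0 ≤ a ∧ b^2 + c^2 ≤ 5 * a^2 := by
  constructor
  · linarith
  · nlinarith [mul_nonneg (sub_nonneg.2 hb) (sub_nonneg.2 hc)]

private lemma norm_le_key' (x : EuclideanSpace ℝ (Fin 2)) (a : ℝ)
    (h0 : x 0 ≤ a) (h1 : (-x 0 + Real.sqrt 3 * x 1) / 2 ≤ a)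
    (h2 : (-x 0 - Real.sqrt 3 * x 1) / 2 ≤ a)
    (ha : a = x 0 ∨ a = (-x 0 + Real.sqrt 3 * x 1) / 2 ∨ a = (-x 0 - Real.sqrt 3 * x 1) / 2) :
    ‖x‖ ≤ 2 * a := by
  have hs2 : Real.sqrt 3 ^ 2 = 3 := Real.sq_sqrt (by norm_num)
  have hn : ‖x‖^2 = x 0^2 + x 1^2 := by
    rw [EuclideanSpace.norm_eq, Real.sq_sqrt (by positivity)]
    simp [Fin.sum_univ_two, sq_abs]
  have hnn : 0 ≤ ‖x‖ := norm_nonneg x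
  have key : 0 ≤ a ∧ ‖x‖^2 ≤ 4 * a^2 := by
    rcases ha with ha | ha | ha
    · obtain ⟨h, h'⟩ := quad_aux' a ((-x 0 + Real.sqrt 3 * x 1) / 2)
        ((-x 0 - Real.sqrt 3 * x 1) / 2) (by rw [ha]; ring) h1 h2
      exact ⟨h, by nlinarith [h', hs2]⟩
    · obtain ⟨h, h'⟩ := quad_aux' a (x 0) ((-x 0 - Real.sqrt 3 * x 1) / 2)
        (by rw [ha]; ring) h0 h2
      exact ⟨h, by nlinarith [h', hs2]⟩
    · obtain ⟨h, h'⟩ := quad_aux' a (x 0) ((-x 0 + Real.sqrt 3 * x 1) / 2)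
        (by rw [ha]; ring) h0 h1
      exact ⟨h, by nlinarith [h', hs2]⟩
  obtain ⟨h, h'⟩ := key
  nlinarith [h, h', hnn]

private lemma bounded_of_key' (S : Set (EuclideanSpace ℝ (Fin 2)))
    (c : EuclideanSpace ℝ (Fin 2)) (F : EuclideanSpace ℝ (Fin 2) → ℝ)
    (hsymm : ∀ x ∈ S, 2 • c - x ∈ S)
    (hkey : ∀ z ∈ S, ‖z‖ ≤ 2 * F z)
    (hlin : ∀ z, F (2 • c - z) = 2 * F c - F z) : Bornology.IsBounded S := by
  have hsub : S ⊆ Metric.closedBall 0 (2 * F c + ‖c‖) := by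
    intro x hx
    have hy := hsymm x hx
    have h1 := hkey x hx
    have h2 := hkey _ hy
    rw [hlin x] at h2
    have h3 : ‖x‖ ≤ ‖(2 : ℕ) • c‖ + ‖2 • c - x‖ := by
      calc ‖x‖ = ‖2 • c - (2 • c - x)‖ := by rw [sub_sub_cancel]
        _ ≤ _ := norm_sub_le _ _
    have h4 : ‖(2 : ℕ) • c‖ ≤ 2 * ‖c‖ := by
      rw [two_smul]
      calc ‖c + c‖ ≤ ‖c‖ + ‖c‖ := norm_add_le _ _
        _ = 2 * ‖c‖ := by ring
    rw [Metric.mem_closedBall, dist_zero_right]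
    linarith
  exact Metric.isBounded_closedBall.subset hsub

theorem exists_borel_three_partition_of_plane_without_symmetric_unbounded :
    ∃ B : Fin 3 → Set (EuclideanSpace ℝ (Fin 2)),
      (∀ i, MeasurableSet (B i)) ∧
      (⋃ i, B i) = univ ∧
      Pairwise (Function.onFun Disjoint B) ∧
      ∀ (i : Fin 3) (c : EuclideanSpace ℝ (Fin 2)) (S : Set (EuclideanSpace ℝ (Fin 2))),
        S ⊆ B i → (fun x => 2 • c - x) '' S = S → Bornology.IsBounded S := by
  set s : ℝ := Real.sqrt 3 with hs
  refine ⟨![{x | (-x 0 + s * x 1) / 2 ≤ x 0 ∧ (-x 0 - s * x 1) / 2 ≤ x 0},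
            {x | x 0 < (-x 0 + s * x 1) / 2 ∧ (-x 0 - s * x 1) / 2 ≤ (-x 0 + s * x 1) / 2},
            {x | x 0 < (-x 0 - s * x 1) / 2 ∧ (-x 0 + s * x 1) / 2 < (-x 0 - s * x 1) / 2}],
          ?_, ?_, ?_, ?_⟩
  · -- measurability
    have m0 : Measurable fun x : EuclideanSpace ℝ (Fin 2) => x 0 := by fun_prop
    have m1 : Measurable fun x : EuclideanSpace ℝ (Fin 2) => x 1 := by fun_prop
    have mf1 : Measurable fun x : EuclideanSpace ℝ (Fin 2) => (-x 0 + s * x 1) / 2 :=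
      (m0.neg.add (m1.const_mul s)).div_const 2
    have mf2 : Measurable fun x : EuclideanSpace ℝ (Fin 2) => (-x 0 - s * x 1) / 2 :=
      (m0.neg.sub (m1.const_mul s)).div_const 2
    intro i
    fin_cases i
    · exact (measurableSet_le mf1 m0).inter (measurableSet_le mf2 m0)
    · exact (measurableSet_lt m0 mf1).inter (measurableSet_le mf2 mf1)
    · exact (measurableSet_lt m0 mf2).inter (measurableSet_lt mf1 mf2)
  · -- union = univ
    ext x
    simp only [mem_iUnion, mem_univ, iff_true]
    rcases le_or_gt ((-x 0 + s * x 1) / 2) (x 0) with h01 | h01 <;>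
      rcases le_or_gt ((-x 0 - s * x 1) / 2) (x 0) with h02 | h02 <;>
      rcases le_or_gt ((-x 0 - s * x 1) / 2) ((-x 0 + s * x 1) / 2) with h12 | h12 <;>
      first
        | exact ⟨0, ⟨by linarith, by linarith⟩⟩
        | exact ⟨1, ⟨by linarith, by linarith⟩⟩
        | exact ⟨2, ⟨by linarith, by linarith⟩⟩
  · -- pairwise disjoint
    intro i j hij
    fin_cases i <;> fin_cases j <;>
      first
        | exact absurd rfl hij
        | (rw [Function.onFun, Set.disjoint_left]
           rintro x ⟨hx1, hx2⟩ ⟨hx3, hx4⟩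
           simp_all
           linarith)
  · -- no unbounded centrally symmetric subset
    intro i c S hS hsym
    have hsymm : ∀ x ∈ S, 2 • c - x ∈ S := by
      intro x hx
      rw [← hsym]
      exact ⟨x, hx, rfl⟩
    have e0 : ∀ z : EuclideanSpace ℝ (Fin 2), (2 • c - z) 0 = 2 * c 0 - z 0 := by
      intro z; simp
    have e1 : ∀ z : EuclideanSpace ℝ (Fin 2), (2 • c - z) 1 = 2 * c 1 - z 1 := by
      intro z; simp
    fin_cases i
    · refine bounded_of_key' S c (fun z => z 0) hsymm ?_ ?_
      · intro z hz
        obtain ⟨h1, h2⟩ := hS hz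
        exact norm_le_key' z (z 0) le_rfl h1 h2 (Or.inl rfl)
      · intro z; show (2 • c - z) 0 = 2 * c 0 - z 0; rw [e0]
    · refine bounded_of_key' S c (fun z => (-z 0 + s * z 1) / 2) hsymm ?_ ?_
      · intro z hz
        obtain ⟨h1, h2⟩ := hS hz
        exact norm_le_key' z _ h1.le le_rfl h2 (Or.inr (Or.inl rfl))
      · intro z; show (-(2 • c - z) 0 + s * (2 • c - z) 1) / 2 = _; rw [e0, e1]; ring
    · refine bounded_of_key' S c (fun z => (-z 0 - s * z 1) / 2) hsymm ?_ ?_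
      · intro z hz
        obtain ⟨h1, h2⟩ := hS hz
        exact norm_le_key' z _ h1.le h2.le le_rfl (Or.inr (Or.inr rfl))
      · intro z; show (-(2 • c - z) 0 - s * (2 • c - z) 1) / 2 = _; rw [e0, e1]; ring
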